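/- If φ : G → G is a contractive automorphism of a topological group G (i.e., φⁿ(x) → 1 for all x), then for every neighborhood X of the identity and every compact set V ⊆ G there exists N such that φⁿ(V) ⊆ X for all n ≥ N. -/

import Mathlib

/-- If φ is a contractive automorphism of a locally compact Hausdorff
topological group G, then for every neighborhood X of 1 and every compact
V ⊆ G there is N with φⁿ(V) ⊆ X for all n ≥ N. -/
theorem contractive_automorphism_uniform_on_compacts
    {G : Type*} [TopologicalSpace G] [Group G] [IsTopologicalGroup G]
    [LocallyCompactSpace G] [T2Space G]
    (φ : G ≃* G) (hcont : Continuous φ) (hcont' : Continuous φ.symm)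
    (hcontr : ∀ x : G, Filter.Tendsto (fun n => (⇑φ)^[n] x) Filter.atTop (nhds (1 : G))) :
    ∀ X ∈ nhds (1 : G), ∀ V : Set G, IsCompact V →
      ∃ N : ℕ, ∀ n ≥ N, (⇑φ)^[n] '' V ⊆ X := by
  have hiter_cont : ∀ k : ℕ, Continuous ((⇑φ)^[k]) := fun k => hcont.iterate k
  have hiter_mul : ∀ (k : ℕ) (a b : G),
      (⇑φ)^[k] (a * b) = (⇑φ)^[k] a * (⇑φ)^[k] b := by
    intro k
    induction k with
    | zero => intro a b; simp
    | succ k ih =>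
        intro a b
        simp [Function.iterate_succ_apply', ih, map_mul]
  have hiter_inv : ∀ (k : ℕ) (a : G), (⇑φ)^[k] a⁻¹ = ((⇑φ)^[k] a)⁻¹ := by
    intro k
    induction k with
    | zero => intro a; simp
    | succ k ih =>
        intro a
        simp [Function.iterate_succ_apply', ih, map_inv]
  intro X hX V hV
  -- split the neighborhood: Z with Z / Z ⊆ X
  obtain ⟨Z, hZ, hZX⟩ := exists_nhds_split_inv hX
  -- compact neighborhood K ⊆ Z
  obtain ⟨K, hK, hKZ, hKc⟩ := local_compact_nhds (x := (1 : G)) hZ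
  -- Baire category on the closed sets F n
  set F : ℕ → Set G := fun n => ⋂ m : ℕ, (⇑φ)^[n + m] ⁻¹' K with hF
  have hFclosed : ∀ n, IsClosed (F n) := fun n =>
    isClosed_iInter fun m => hKc.isClosed.preimage (hiter_cont _)
  have hFunion : ⋃ n, F n = Set.univ := by
    ext x
    simp only [Set.mem_iUnion, Set.mem_univ, iff_true]
    obtain ⟨n, hn⟩ := Filter.eventually_atTop.mp ((hcontr x).eventually_mem hK)
    refine ⟨n, Set.mem_iInter.mpr fun m => hn _ (Nat.le_add_right n m)⟩
  obtain ⟨n₀, ⟨p, hp⟩⟩ := nonempty_interior_of_iUnion_of_closed hFclosed hFunion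
  -- the neighborhood Q of 1 with φ^[m] Q ⊆ X for m ≥ n₀
  set Q : Set G := (fun x => x * p) ⁻¹' interior (F n₀) with hQ
  have hQopen : IsOpen Q := isOpen_interior.preimage (continuous_mul_right p)
  have hQ1 : (1 : G) ∈ Q := by simpa [hQ] using hp
  have hpF : p ∈ F n₀ := interior_subset hp
  have key : ∀ x ∈ Q, ∀ m, n₀ ≤ m → (⇑φ)^[m] x ∈ X := by
    intro x hx m hm
    obtain ⟨k, rfl⟩ := Nat.exists_eq_add_of_le hm
    have hxp : x * p ∈ F n₀ := interior_subset hx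
    have h1 : (⇑φ)^[n₀ + k] (x * p) ∈ K := by
      have := Set.mem_iInter.mp hxp k; exact this
    have h2 : (⇑φ)^[n₀ + k] p ∈ K := by
      have := Set.mem_iInter.mp hpF k; exact this
    have hx' : (⇑φ)^[n₀ + k] x
        = (⇑φ)^[n₀ + k] (x * p) / (⇑φ)^[n₀ + k] p := by
      rw [div_eq_mul_inv, ← hiter_inv, ← hiter_mul]
      simp [mul_assoc]
    rw [hx']
    exact hZX _ (hKZ h1) _ (hKZ h2)
  -- pointwise: every point eventually enters Q
  have hchoice : ∀ x : G, ∃ k : ℕ, (⇑φ)^[k] x ∈ Q :=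
    fun x => ((hcontr x).eventually_mem (hQopen.mem_nhds hQ1)).exists
  choose nx hnx using hchoice
  -- open cover of V
  have hU : ∀ x ∈ V, (⇑φ)^[nx x] ⁻¹' Q ∈ nhds x := fun x _ =>
    (hQopen.preimage (hiter_cont _)).mem_nhds (hnx x)
  obtain ⟨t, htV, hcover⟩ := hV.elim_nhds_subcover (fun x => (⇑φ)^[nx x] ⁻¹' Q) hU
  refine ⟨n₀ + t.sup nx, ?_⟩
  rintro n hn _ ⟨y, hy, rfl⟩
  obtain ⟨x, hxt, hyx⟩ := Set.mem_iUnion₂.mp (hcover hy)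
  have hnx_le : nx x ≤ t.sup nx := Finset.le_sup hxt
  have hsplit : n = (n - nx x) + nx x := by omega
  have : (⇑φ)^[n] y = (⇑φ)^[n - nx x] ((⇑φ)^[nx x] y) := by
    conv_lhs => rw [hsplit]
    rw [Function.iterate_add_apply]
  rw [this]
  exact key _ hyx _ (by omega)
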